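/- Let G be a 4-regular plane graph with a cutpoint c. Then all four edges incident with c belong to the same circuit of the threaded circuit partition of G. -/

import Mathlib

/-!
A combinatorial map ("plane graph" via rotation system): `D` is the set of darts
(edge-ends); `rot` is the counterclockwise rotation of darts around their vertex
(vertices are `rot`-orbits); `inv` pairs the two darts of each edge
(edges are `inv`-orbits, of size 2).
-/
structure CombMap (D : Type) [Fintype D] [DecidableEq D] where
  rot : Equiv.Perm D
  inv : Equiv.Perm D
  inv_invol : ∀ d, inv (inv d) = d
  inv_ne : ∀ d, inv d ≠ d

namespace CombMap

variable {D : Type} [Fintype D] [DecidableEq D] (M : CombMap D)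

/-- Every vertex has degree 4: each `rot`-orbit has size exactly 4. -/
def FourRegular : Prop :=
  (∀ d, M.rot (M.rot (M.rot (M.rot d))) = d) ∧ (∀ d, M.rot d ≠ d) ∧
    (∀ d, M.rot (M.rot d) ≠ d)

/-- `IsThread d e`: the length-two path consisting of the edge of dart `d`
(traversed from the vertex of `d` to the vertex of `inv d`, the midpoint)
followed by the edge of dart `e` is a thread: `e` is a dart at the midpoint and
the two edges are not contiguous in the rotation at the midpoint. -/
def IsThread (d e : D) : Prop :=
  M.rot.SameCycle (M.inv d) e ∧ e ≠ M.inv d ∧ e ≠ M.rot (M.inv d) ∧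
    M.rot e ≠ M.inv d

/-- Traversing the edge of dart `d` and continuing straight through the vertex
at its far end: the unique continuation of a threaded circuit. -/
def threadStep (d : D) : D := M.rot (M.rot (M.inv d))

/-- A set of darts closed under continuing along threads and under reversal:
closed unions of (undirected) threaded circuits. -/
def ClosedTC (s : Set D) : Prop := ∀ x ∈ s, M.threadStep x ∈ s ∧ M.inv x ∈ s

/-- The set of darts of a single (undirected) threaded circuit: a minimal
nonempty set of darts closed under thread-continuation and reversal. -/
def Circuit (s : Set D) : Prop :=
  s.Nonempty ∧ M.ClosedTC s ∧ ∀ t ⊆ s, t.Nonempty → M.ClosedTC t → t = s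

/-- The number of circuits in the threaded circuit partition. -/
noncomputable def circuitCount : ℕ := Set.ncard {s : Set D | M.Circuit s}

/-- Reachability between darts by walking along edges and around vertices,
avoiding the darts in `A`. -/
def ReachAvoiding (A : Set D) (a b : D) : Prop :=
  Relation.ReflTransGen
    (fun x y => (y = M.rot x ∨ y = M.inv x) ∧ x ∉ A ∧ y ∉ A) a b

/-- The graph is connected. -/
def Connected : Prop := ∀ a b : D, M.ReachAvoiding ∅ a b

/-- Number of vertices: the number of `rot`-orbits. -/
noncomputable def vertexCount : ℕ :=
  Set.ncard {s : Set D | ∃ d, s = {e | M.rot.SameCycle d e}}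

/-- Number of edges: the number of `inv`-orbits. -/
noncomputable def edgeCount : ℕ :=
  Set.ncard {s : Set D | ∃ d, s = {e | M.inv.SameCycle d e}}

/-- Number of faces: the number of orbits of the face permutation `rot ∘ inv`. -/
noncomputable def faceCount : ℕ :=
  Set.ncard {s : Set D | ∃ d, s = {e | (M.rot * M.inv).SameCycle d e}}

/-- The embedding is planar (genus 0): Euler's formula `V - E + F = 2` holds. -/
def EulerPlanar : Prop :=
  (M.vertexCount : ℤ) - (M.edgeCount : ℤ) + (M.faceCount : ℤ) = 2

end CombMap


set_option linter.unusedSectionVars false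
open Equiv Equiv.Perm
variable {D : Type} [Fintype D] [DecidableEq D]

def scS (π : Equiv.Perm D) : Setoid D :=
  ⟨π.SameCycle, ⟨Equiv.Perm.SameCycle.refl π, Equiv.Perm.SameCycle.symm, Equiv.Perm.SameCycle.trans⟩⟩

instance scSFintype (π : Equiv.Perm D) : Fintype (Quotient (scS π)) :=
  @Quotient.fintype D _ (scS π) (fun x y => (inferInstance : Decidable (π.SameCycle x y)))

abbrev Qt (π : Equiv.Perm D) := Quotient (scS π)
def qm (π : Equiv.Perm D) (d : D) : Qt π := Quotient.mk (scS π) d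

theorem qm_eq_iff (π : Equiv.Perm D) {a b : D} : qm π a = qm π b ↔ π.SameCycle a b :=
  ⟨fun h => Quotient.exact h, fun h => Quotient.sound h⟩

theorem qm_surj (π : Equiv.Perm D) (v : Qt π) : ∃ d, qm π d = v :=
  ⟨v.out, Quotient.out_eq v⟩

section basic
variable (σ ι : Equiv.Perm D)

variable (σ ι : Equiv.Perm D)

theorem pow4_eq_one (h : ∀ d, σ (σ (σ (σ d))) = d) : σ ^ 4 = 1 := by
  ext d; simp [pow_succ, Equiv.Perm.mul_apply, h d]

theorem zpow_mod4 (h : σ ^ 4 = 1) (k : ℤ) : σ ^ k = σ ^ (k % 4) := by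
  conv_lhs => rw [show k = 4 * (k / 4) + k % 4 by omega]
  rw [zpow_add, zpow_mul]
  norm_cast
  rw [h, one_zpow, one_mul]

theorem cyc4 (h : σ ^ 4 = 1) {d x : D} (hx : σ.SameCycle d x) :
    x = d ∨ x = σ d ∨ x = σ (σ d) ∨ x = σ (σ (σ d)) := by
  obtain ⟨k, hk⟩ := hx
  rw [zpow_mod4 σ h] at hk
  have h0 : (0:ℤ) ≤ k % 4 := Int.emod_nonneg k (by norm_num)
  have h4 : k % 4 < 4 := Int.emod_lt_of_pos k (by norm_num)
  have e1 : (σ ^ (1:ℤ)) d = σ d := by rw [zpow_one]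
  have e2 : (σ ^ (2:ℤ)) d = σ (σ d) := by
    rw [show (2:ℤ) = ((2:ℕ):ℤ) from rfl, zpow_natCast]
    simp [pow_succ, Equiv.Perm.mul_apply]
  have e3 : (σ ^ (3:ℤ)) d = σ (σ (σ d)) := by
    rw [show (3:ℤ) = ((3:ℕ):ℤ) from rfl, zpow_natCast]
    simp [pow_succ, Equiv.Perm.mul_apply]
  interval_cases h : (k % 4)
  · left; rw [← hk]; simp
  · right; left; rw [← hk, e1]
  · right; right; left; rw [← hk, e2]
  · right; right; right; rw [← hk, e3]
theorem zpow_mod2 (h : ι ^ 2 = 1) (k : ℤ) : ι ^ k = ι ^ (k % 2) := by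
  conv_lhs => rw [show k = 2 * (k / 2) + k % 2 by omega]
  rw [zpow_add, zpow_mul]; norm_cast; rw [h, one_zpow, one_mul]

theorem cyc2 (h : ι ^ 2 = 1) {d x : D} (hx : ι.SameCycle d x) : x = d ∨ x = ι d := by
  obtain ⟨k, hk⟩ := hx
  rw [zpow_mod2 ι h] at hk
  have h0 : (0:ℤ) ≤ k % 2 := Int.emod_nonneg k (by norm_num)
  have h2 : k % 2 < 2 := Int.emod_lt_of_pos k (by norm_num)
  interval_cases h : (k % 2)
  · left; rw [← hk]; simp
  · right; rw [← hk, zpow_one]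

theorem claimstar (hσ4 : σ ^ 4 = 1) (hσ2 : ∀ d, σ (σ d) ≠ d)
    (hι2 : ι * ι = 1) (hιne : ∀ d, ι d ≠ d) (d : D) (i : ℕ) :
    ((σ * σ * ι) ^ i) d ≠ ι d := by
  intro h
  set g := σ * σ * ι with hg
  have hσσ : (σ * σ) * (σ * σ) = 1 := by
    have : σ ^ 4 = (σ * σ) * (σ * σ) := by
      rw [show (4:ℕ) = 2 + 2 from rfl, pow_add, pow_two]
    rw [← this, hσ4]
  have hconj1 : ι * g * ι = g⁻¹ := by
    rw [hg]
    have hinv : (σ * σ * ι)⁻¹ = ι * (σ * σ) := by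
      rw [mul_inv_rev, inv_eq_of_mul_eq_one_right hι2, inv_eq_of_mul_eq_one_right hσσ]
    rw [hinv]
    calc ι * (σ * σ * ι) * ι = ι * (σ * σ) * (ι * ι) := by group
    _ = ι * (σ * σ) := by rw [hι2, mul_one]
  have hconj : ∀ m : ℕ, ι * g ^ m * ι = (g ^ m)⁻¹ := by
    intro m; induction m with
    | zero => simpa using hι2
    | succ m ih =>
      have : ι * g ^ (m+1) * ι = (ι * g ^ m * ι) * (ι * g * ι) := by
        rw [pow_succ]
        calc ι * (g ^ m * g) * ι = ι * g ^ m * ((ι * ι) * g) * ι := by rw [hι2]; group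
        _ = (ι * g ^ m * ι) * (ι * g * ι) := by group
      rw [this, ih, hconj1, ← mul_inv_rev, ← pow_succ']
  rcases Nat.even_or_odd i with ⟨m, hm⟩ | ⟨m, hm⟩
  · -- i = 2m : ι fixes g^m d
    apply hιne ((g ^ m) d)
    have h1 : (ι * g ^ m * ι) (ι d) = ι ((g ^ m) d) := by
      simp [Equiv.Perm.mul_apply, show ι (ι d) = d from by
        have := congrArg (fun p => p d) hι2; simpa [Equiv.Perm.mul_apply] using this]
    have h2 : ((g ^ m)⁻¹) (ι d) = (g ^ m) d := by
      rw [← h, hm, show m + m = m + m from rfl, pow_add, Equiv.Perm.mul_apply,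
        Equiv.Perm.inv_def, Equiv.symm_apply_apply]
    rw [hconj m] at h1
    rw [h2] at h1
    exact h1.symm
  · -- i = 2m+1 : σ² fixes ι (g^m d)
    apply hσ2 (ι ((g ^ m) d))
    have h1 : (ι * g ^ m * ι) (ι d) = ι ((g ^ m) d) := by
      simp [Equiv.Perm.mul_apply, show ι (ι d) = d from by
        have := congrArg (fun p => p d) hι2; simpa [Equiv.Perm.mul_apply] using this]
    have h2 : ((g ^ m)⁻¹) (ι d) = g ((g ^ m) d) := by
      rw [← h, hm, show 2 * m + 1 = m + (m + 1) from by ring, pow_add, Equiv.Perm.mul_apply,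
        Equiv.Perm.inv_def, Equiv.symm_apply_apply, pow_succ']
      rfl
    rw [hconj m] at h1
    rw [h2] at h1
    -- h1 : g ((g^m) d) = ι ((g^m) d)... direction check
    have : σ (σ (ι ((g^m) d))) = g ((g^m) d) := by simp [hg, Equiv.Perm.mul_apply]
    rw [this, h1]
end basic

section four
variable {σ : Equiv.Perm D} (hσ4 : ∀ d, σ (σ (σ (σ d))) = d)
    (hσ1 : ∀ d, σ d ≠ d) (hσ2 : ∀ d, σ (σ d) ≠ d)
include hσ4 hσ1 hσ2

theorem sum4_ind (x d : D) :
    ((if x = d then 1 else 0) + (if σ x = d then 1 else 0) + (if σ (σ x) = d then 1 else 0)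
      + (if σ (σ (σ x)) = d then 1 else 0) : ZMod 2)
    = if σ.SameCycle x d then 1 else 0 := by
  have hσ3 : ∀ e, σ (σ (σ e)) ≠ e := by
    intro e he
    have := congrArg σ he
    rw [hσ4 e] at this
    exact hσ1 e this.symm
  have hpow : σ ^ 4 = 1 := by ext e; simp [pow_succ, Equiv.Perm.mul_apply, hσ4 e]
  have sc1 : ∀ e : D, σ.SameCycle e (σ e) := fun e => ⟨1, by simp⟩
  have b0 : ∀ e : D, ((((if e = e then (1:ZMod 2) else 0) + (if σ e = e then 1 else 0))
      + (if σ (σ e) = e then 1 else 0)) + (if σ (σ (σ e)) = e then 1 else 0)) = 1 := by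
    intro e; simp [hσ1 e, hσ2 e, hσ3 e]
  have b1 : ∀ e : D, ((((if e = σ e then (1:ZMod 2) else 0) + (if σ e = σ e then 1 else 0))
      + (if σ (σ e) = σ e then 1 else 0)) + (if σ (σ (σ e)) = σ e then 1 else 0)) = 1 := by
    intro e
    have n0 : ¬ e = σ e := fun h => hσ1 e h.symm
    have n2 : ¬ σ (σ e) = σ e := fun h => hσ1 e (σ.injective h)
    have n3 : ¬ σ (σ (σ e)) = σ e := fun h => hσ2 e (σ.injective h)
    simp [n0, n2, n3]
  have b2 : ∀ e : D, ((((if e = σ (σ e) then (1:ZMod 2) else 0) + (if σ e = σ (σ e) then 1 else 0))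
      + (if σ (σ e) = σ (σ e) then 1 else 0)) + (if σ (σ (σ e)) = σ (σ e) then 1 else 0)) = 1 := by
    intro e
    have n0 : ¬ e = σ (σ e) := fun h => hσ2 e h.symm
    have n1 : ¬ σ e = σ (σ e) := fun h => hσ1 e (σ.injective h.symm)
    have n3 : ¬ σ (σ (σ e)) = σ (σ e) := fun h => hσ1 e (σ.injective (σ.injective h))
    simp [n0, n1, n3]
  have b3 : ∀ e : D, ((((if e = σ (σ (σ e)) then (1:ZMod 2) else 0) + (if σ e = σ (σ (σ e)) then 1 else 0))
      + (if σ (σ e) = σ (σ (σ e)) then 1 else 0)) + (if σ (σ (σ e)) = σ (σ (σ e)) then 1 else 0)) = 1 := by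
    intro e
    have n0 : ¬ e = σ (σ (σ e)) := fun h => hσ3 e h.symm
    have n1 : ¬ σ e = σ (σ (σ e)) := fun h => hσ2 e (σ.injective h.symm)
    have n2 : ¬ σ (σ e) = σ (σ (σ e)) := fun h => hσ1 e (σ.injective (σ.injective h.symm))
    simp [n0, n1, n2]
  by_cases hs : σ.SameCycle x d
  · rw [if_pos hs]
    obtain h | h | h | h := cyc4 σ hpow hs
    all_goals subst h
    · exact b0 _
    · exact b1 _
    · exact b2 _
    · exact b3 _
  · rw [if_neg hs]
    have n0 : ¬ x = d := fun h => hs (h ▸ Equiv.Perm.SameCycle.refl σ x)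
    have n1 : ¬ σ x = d := fun h => hs (h ▸ sc1 x)
    have n2 : ¬ σ (σ x) = d := fun h => hs (h ▸ ((sc1 x).trans (sc1 (σ x))))
    have n3 : ¬ σ (σ (σ x)) = d := fun h =>
      hs (h ▸ (((sc1 x).trans (sc1 (σ x))).trans (sc1 (σ (σ x)))))
    simp [n0, n1, n2, n3]
end four



theorem orbcount (π : Equiv.Perm D) :
    Set.ncard {s : Set D | ∃ d, s = {e | π.SameCycle d e}} = Fintype.card (Quotient (scS π)) := by
  rw [← Nat.card_coe_set_eq, ← Nat.card_eq_fintype_card]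
  symm
  apply Nat.card_eq_of_bijective
    (f := fun q => Quotient.liftOn q
      (fun d => (⟨{e | π.SameCycle d e}, d, rfl⟩ : {s : Set D | ∃ d, s = {e | π.SameCycle d e}}))
      (fun a b hab => Subtype.ext (by
        ext e
        exact ⟨fun h => (Equiv.Perm.SameCycle.symm hab).trans h, fun h => hab.trans h⟩)))
  constructor
  · refine Quotient.ind fun a => Quotient.ind fun b h => Quotient.sound ?_
    have : a ∈ {e | π.SameCycle a e} := Equiv.Perm.SameCycle.refl π a
    rw [show {e | π.SameCycle a e} = {e | π.SameCycle b e} from congrArg Subtype.val h] at this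
    exact (Equiv.Perm.SameCycle.symm this)
  · rintro ⟨s, d, rfl⟩
    exact ⟨Quotient.mk _ d, rfl⟩

section LA
variable (σ ι : Equiv.Perm D)

theorem fq_inv (hι : ∀ d, ι (ι d) = d) (e : D) : qm (σ * ι) (ι e) = qm (σ * ι) (σ e) :=
  Quotient.sound ⟨1, by simp [Equiv.Perm.mul_apply, hι e]⟩

theorem fq_phi (e : D) : qm (σ * ι) (σ (ι e)) = qm (σ * ι) e :=
  (Quotient.sound ⟨1, by simp [Equiv.Perm.mul_apply]⟩ : qm (σ*ι) e = qm (σ*ι) (σ (ι e))).symm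

def Afun (hι : ∀ d, ι (ι d) = d) (ub : Qt (σ * ι) → ZMod 2) : Qt ι → ZMod 2 :=
  Quotient.lift (fun d => ub (qm (σ * ι) d) + ub (qm (σ * ι) (ι d)))
    (by
      intro a b hab
      have hpow : ι ^ 2 = 1 := by ext e; simp [pow_succ, Equiv.Perm.mul_apply, hι e]
      rcases cyc2 ι hpow hab with rfl | rfl
      · rfl
      · simp only [hι a]; exact add_comm _ _)

def Amap (hι : ∀ d, ι (ι d) = d) :
    (Qt (σ * ι) → ZMod 2) →ₗ[ZMod 2] (Qt ι → ZMod 2) where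
  toFun := Afun σ ι hι
  map_add' := by
    intro u v; funext e
    induction e using Quotient.ind with
    | _ d => simp [Afun, Quotient.lift_mk]; ring
  map_smul' := by
    intro c u; funext e
    induction e using Quotient.ind with
    | _ d => simp [Afun, Quotient.lift_mk]; ring

def Bfun (hσ4 : ∀ d, σ (σ (σ (σ d))) = d) (w : Qt ι → ZMod 2) : Qt σ → ZMod 2 :=
  Quotient.lift (fun d => w (qm ι d) + w (qm ι (σ d)) + w (qm ι (σ (σ d)))
      + w (qm ι (σ (σ (σ d)))))
    (by
      intro a b hab
      have hpow : σ ^ 4 = 1 := by ext e; simp [pow_succ, Equiv.Perm.mul_apply, hσ4 e]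
      rcases cyc4 σ hpow hab with rfl | rfl | rfl | rfl
      · rfl
      · simp only [hσ4 a]; ring
      · simp only [hσ4 a, congrArg σ (hσ4 a)]; ring
      · simp only [hσ4 a, congrArg σ (hσ4 a), congrArg σ (congrArg σ (hσ4 a))]; ring)

def Bmap (hσ4 : ∀ d, σ (σ (σ (σ d))) = d) :
    (Qt ι → ZMod 2) →ₗ[ZMod 2] (Qt σ → ZMod 2) where
  toFun := Bfun σ ι hσ4
  map_add' := by
    intro u v; funext e
    induction e using Quotient.ind with
    | _ d => simp [Bfun, Quotient.lift_mk]; ring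
  map_smul' := by
    intro c u; funext e
    induction e using Quotient.ind with
    | _ d => simp [Bfun, Quotient.lift_mk]; ring

end LA

instance qtDecEq (π : Equiv.Perm D) : DecidableEq (Qt π) := fun a b =>
  Quotient.recOnSubsingleton₂ a b
    (fun x y => decidable_of_iff (π.SameCycle x y) (qm_eq_iff π).symm)

def chi (π : Equiv.Perm D) (v : Qt π) : Qt π → ZMod 2 := fun w => if w = v then 1 else 0

section potential
variable {σ ι : Equiv.Perm D}

theorem Bsingle (hσ4 : ∀ d, σ (σ (σ (σ d))) = d) (hσ1 : ∀ d, σ d ≠ d)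
    (hσ2 : ∀ d, σ (σ d) ≠ d) (hι : ∀ d, ι (ι d) = d) (hιne : ∀ d, ι d ≠ d) (a : D) :
    Bmap σ ι hσ4 (chi ι (qm ι a)) = chi σ (qm σ a) + chi σ (qm σ (ι a)) := by
  have hι2 : ι ^ 2 = 1 := by ext e; simp [pow_succ, Equiv.Perm.mul_apply, hι e]
  have edge_ind : ∀ y : D, chi ι (qm ι a) (qm ι y)
      = (if y = a then (1:ZMod 2) else 0) + (if y = ι a then 1 else 0) := by
    intro y
    show (if qm ι y = qm ι a then (1:ZMod 2) else 0) = _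
    by_cases h1 : y = a
    · subst h1
      rw [if_pos rfl, if_pos rfl, if_neg (fun h => hιne y h.symm)]
      decide
    · by_cases h2 : y = ι a
      · subst h2
        have hsc : ι.SameCycle (ι a) a := ⟨1, by simp [hι a]⟩
        have hq : qm ι (ι a) = qm ι a := Quotient.sound hsc
        rw [if_pos hq, if_neg h1, if_pos rfl]
        decide
      · rw [if_neg (fun h => by
          rcases cyc2 ι hι2 (Equiv.Perm.SameCycle.symm ((qm_eq_iff ι).mp h)) with h' | h'
          · exact h1 h'
          · exact h2 h'), if_neg h1, if_neg h2]
        decide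
  funext v
  induction v using Quotient.ind with
  | _ x =>
    show Bfun σ ι hσ4 (chi ι (qm ι a)) (qm σ x)
        = chi σ (qm σ a) (qm σ x) + chi σ (qm σ (ι a)) (qm σ x)
    have hBe : Bfun σ ι hσ4 (chi ι (qm ι a)) (qm σ x)
        = chi ι (qm ι a) (qm ι x) + chi ι (qm ι a) (qm ι (σ x))
          + chi ι (qm ι a) (qm ι (σ (σ x))) + chi ι (qm ι a) (qm ι (σ (σ (σ x)))) := rfl
    rw [hBe, edge_ind x, edge_ind (σ x), edge_ind (σ (σ x)), edge_ind (σ (σ (σ x)))]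
    have s1 := sum4_ind hσ4 hσ1 hσ2 x a
    have s2 := sum4_ind hσ4 hσ1 hσ2 x (ι a)
    have r1 : chi σ (qm σ a) (qm σ x) = (if σ.SameCycle x a then (1:ZMod 2) else 0) := by
      show (if qm σ x = qm σ a then (1:ZMod 2) else 0) = _
      simp only [qm_eq_iff]
    have r2 : chi σ (qm σ (ι a)) (qm σ x) = (if σ.SameCycle x (ι a) then (1:ZMod 2) else 0) := by
      show (if qm σ x = qm σ (ι a) then (1:ZMod 2) else 0) = _
      simp only [qm_eq_iff]
    rw [r1, r2, ← s1, ← s2]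
    ring

theorem exists_potential
    (hσ4 : ∀ d, σ (σ (σ (σ d))) = d) (hσ1 : ∀ d, σ d ≠ d) (hσ2 : ∀ d, σ (σ d) ≠ d)
    (hι : ∀ d, ι (ι d) = d) (hιne : ∀ d, ι d ≠ d)
    (hconn : ∀ a b : D, Relation.ReflTransGen (fun x y => y = σ x ∨ y = ι x) a b)
    (heuler : (Fintype.card (Qt σ) : ℤ) - Fintype.card (Qt ι) + Fintype.card (Qt (σ * ι)) = 2)
    (z : D → ZMod 2) (hzι : ∀ d, z (ι d) = z d)
    (hzv : ∀ d, z d + z (σ d) + z (σ (σ d)) + z (σ (σ (σ d))) = 0)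
    (d₀ : D) :
    ∃ u : D → ZMod 2, (∀ d, u (σ (ι d)) = u d) ∧ (∀ d, u (ι d) = u d + z d) := by
  have hι2 : ι ^ 2 = 1 := by ext e; simp [pow_succ, Equiv.Perm.mul_apply, hι e]
  set A := Amap σ ι hι with hA
  set B := Bmap σ ι hσ4 with hB
  have hAeval : ∀ (ub : Qt (σ*ι) → ZMod 2) (x : D),
      A ub (qm ι x) = ub (qm (σ*ι) x) + ub (qm (σ*ι) (ι x)) := fun ub x => rfl
  have hBeval : ∀ (w : Qt ι → ZMod 2) (x : D),
      B w (qm σ x) = w (qm ι x) + w (qm ι (σ x)) + w (qm ι (σ (σ x)))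
        + w (qm ι (σ (σ (σ x)))) := fun w x => rfl
  -- range A ≤ ker B
  have hrange_le : LinearMap.range A ≤ LinearMap.ker B := by
    rintro w ⟨ub, rfl⟩
    rw [LinearMap.mem_ker]
    funext v
    induction v using Quotient.ind with
    | _ x =>
      show B (A ub) (qm σ x) = (0 : Qt σ → ZMod 2) (qm σ x)
      rw [Pi.zero_apply, hBeval, hAeval, hAeval, hAeval, hAeval,
        fq_inv σ ι hι x, fq_inv σ ι hι (σ x), fq_inv σ ι hι (σ (σ x)),
        fq_inv σ ι hι (σ (σ (σ x))), hσ4 x]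
      generalize ub (qm (σ*ι) x) = a
      generalize ub (qm (σ*ι) (σ x)) = b
      generalize ub (qm (σ*ι) (σ (σ x))) = c
      generalize ub (qm (σ*ι) (σ (σ (σ x)))) = e
      revert a b c e; decide
  -- zb in ker B
  set zb : Qt ι → ZMod 2 := Quotient.lift z (by
    intro a b hab
    rcases cyc2 ι hι2 hab with rfl | rfl
    · rfl
    · exact (hzι a).symm) with hzbdef
  have hzb : zb ∈ LinearMap.ker B := by
    rw [LinearMap.mem_ker]
    funext v
    induction v using Quotient.ind with
    | _ x =>
      show B zb (qm σ x) = (0 : Qt σ → ZMod 2) (qm σ x)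
      rw [Pi.zero_apply, hBeval]
      exact hzv x
  -- ker A is the span of the constant-1 vector
  have honeker : ((fun _ => (1:ZMod 2)) : Qt (σ*ι) → ZMod 2) ∈ LinearMap.ker A := by
    rw [LinearMap.mem_ker]
    funext e
    induction e using Quotient.ind with
    | _ x =>
      show A (fun _ => (1:ZMod 2)) (qm ι x) = (0 : Qt ι → ZMod 2) (qm ι x)
      rw [Pi.zero_apply, hAeval]
      decide
  have hkerA : LinearMap.ker A
      = Submodule.span (ZMod 2) {((fun _ => (1:ZMod 2)) : Qt (σ*ι) → ZMod 2)} := by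
    apply le_antisymm
    · intro ub hub
      rw [LinearMap.mem_ker] at hub
      have hstep : ∀ x : D, ub (qm (σ*ι) (ι x)) = ub (qm (σ*ι) x) := by
        intro x
        have h0 := congrFun hub (qm ι x)
        rw [hAeval] at h0
        simp only [Pi.zero_apply] at h0
        have h2 : ∀ a b : ZMod 2, a + b = 0 → b = a := by decide
        exact h2 _ _ h0
      have hstepσ : ∀ x : D, ub (qm (σ*ι) (σ x)) = ub (qm (σ*ι) x) := by
        intro x
        rw [← fq_inv σ ι hι x]
        exact hstep x
      have hU : ∀ e : D, ub (qm (σ*ι) e) = ub (qm (σ*ι) d₀) := by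
        intro e
        have hpath := hconn d₀ e
        induction hpath with
        | refl => rfl
        | tail hp hs ih =>
          rcases hs with rfl | rfl
          · rw [hstepσ _, ih]
          · rw [hstep _, ih]
      rw [Submodule.mem_span_singleton]
      refine ⟨ub (qm (σ*ι) d₀), ?_⟩
      funext e
      induction e using Quotient.ind with
      | _ x =>
        show (ub (qm (σ*ι) d₀)) • (1:ZMod 2) = ub (qm (σ*ι) x)
        rw [smul_eq_mul, mul_one, hU x]
    · rw [Submodule.span_le, Set.singleton_subset_iff]
      exact honeker
  have h1ne : ((fun _ => (1:ZMod 2)) : Qt (σ*ι) → ZMod 2) ≠ 0 := by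
    intro h
    have := congrFun h (qm (σ*ι) d₀)
    rw [Pi.zero_apply] at this
    exact one_ne_zero this
  have hkerA1 : Module.finrank (ZMod 2) (LinearMap.ker A) = 1 := by
    rw [hkerA]
    exact finrank_span_singleton h1ne
  -- rank-nullity for A
  have hrnA := LinearMap.finrank_range_add_finrank_ker A
  rw [hkerA1, Module.finrank_fintype_fun_eq_card] at hrnA
  -- pairs in range B
  have hpairs : ∀ a b : D,
      (chi σ (qm σ a) + chi σ (qm σ b)) ∈ LinearMap.range B := by
    have haddmem : ∀ (u v w : Qt σ → ZMod 2), u + v ∈ LinearMap.range B →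
        v + w ∈ LinearMap.range B → u + w ∈ LinearMap.range B := by
      intro u v w h1 h2
      have : u + w = (u + v) + (v + w) := by
        funext y
        simp only [Pi.add_apply]
        generalize u y = a; generalize v y = b; generalize w y = c
        revert a b c; decide
      rw [this]
      exact Submodule.add_mem _ h1 h2
    intro a b
    have hpath := hconn a b
    induction hpath with
    | refl =>
      have : chi σ (qm σ a) + chi σ (qm σ a) = 0 := by
        funext y
        simp only [Pi.add_apply, Pi.zero_apply]
        generalize chi σ (qm σ a) y = t; revert t; decide
      rw [this]
      exact Submodule.zero_mem _
    | @tail p q hp hs ih =>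
      rcases hs with rfl | rfl
      · have hq : qm σ (σ p) = qm σ p :=
          Quotient.sound (Equiv.Perm.SameCycle.symm (⟨1, by simp⟩ : σ.SameCycle p (σ p)))
        rw [hq]
        exact ih
      · exact haddmem _ (chi σ (qm σ p)) _ ih
          ⟨chi ι (qm ι p), Bsingle hσ4 hσ1 hσ2 hι hιne p⟩
  -- linear independence / rank bound for B
  set v0 : Qt σ := qm σ d₀ with hv0
  set fam : {v : Qt σ // v ≠ v0} → (Qt σ → ZMod 2) := fun v => chi σ v.1 + chi σ v0 with hfam
  have hfam_range : ∀ v, fam v ∈ LinearMap.range B := by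
    rintro ⟨v, hv⟩
    obtain ⟨a, rfl⟩ := qm_surj σ v
    exact hpairs a d₀
  have hli : LinearIndependent (ZMod 2) fam := by
    rw [Fintype.linearIndependent_iff]
    intro g hg w
    have h0 := congrFun hg w.1
    rw [Finset.sum_apply, Pi.zero_apply] at h0
    have hterm : ∀ v : {v : Qt σ // v ≠ v0},
        (g v • fam v) w.1 = if v = w then g v else 0 := by
      intro v
      have hw0 : chi σ v0 w.1 = 0 := by
        show (if w.1 = v0 then (1:ZMod 2) else 0) = 0
        rw [if_neg w.2]
      have hfw : (fam v) w.1 = chi σ v.1 w.1 := by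
        show chi σ v.1 w.1 + chi σ v0 w.1 = _
        rw [hw0, add_zero]
      rw [Pi.smul_apply, hfw, smul_eq_mul]
      by_cases h : v = w
      · subst h
        have : chi σ v.1 v.1 = 1 := by
          show (if v.1 = v.1 then (1:ZMod 2) else 0) = 1
          rw [if_pos rfl]
        rw [this, mul_one, if_pos rfl]
      · have : chi σ v.1 w.1 = 0 := by
          show (if w.1 = v.1 then (1:ZMod 2) else 0) = 0
          rw [if_neg (fun hh => h (Subtype.ext hh.symm))]
        rw [this, mul_zero, if_neg h]
    rw [Finset.sum_congr rfl (fun v _ => hterm v)] at h0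
    rw [Finset.sum_ite_eq' Finset.univ w g] at h0
    rw [if_pos (Finset.mem_univ w)] at h0
    exact h0
  have hspan_le : Submodule.span (ZMod 2) (Set.range fam) ≤ LinearMap.range B := by
    rw [Submodule.span_le]
    rintro _ ⟨v, rfl⟩
    exact hfam_range v
  have hcard_sub : Fintype.card {v : Qt σ // v ≠ v0} = Fintype.card (Qt σ) - 1 := by
    show Fintype.card {v : Qt σ // ¬ (v = v0)} = _
    rw [Fintype.card_subtype_compl, Fintype.card_subtype_eq]
  have hrankB : Fintype.card (Qt σ) - 1 ≤ Module.finrank (ZMod 2) (LinearMap.range B) := by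
    have h1 := finrank_span_eq_card hli
    rw [hcard_sub] at h1
    calc Fintype.card (Qt σ) - 1
        = Module.finrank (ZMod 2) (Submodule.span (ZMod 2) (Set.range fam)) := h1.symm
      _ ≤ _ := Submodule.finrank_mono hspan_le
  have hrnB := LinearMap.finrank_range_add_finrank_ker B
  rw [Module.finrank_fintype_fun_eq_card] at hrnB
  have hVpos : 0 < Fintype.card (Qt σ) := Fintype.card_pos_iff.mpr ⟨qm σ d₀⟩
  have hker_le : Module.finrank (ZMod 2) (LinearMap.ker B)
      ≤ Module.finrank (ZMod 2) (LinearMap.range A) := by omega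
  have heq : LinearMap.range A = LinearMap.ker B :=
    Submodule.eq_of_le_of_finrank_le hrange_le hker_le
  rw [← heq] at hzb
  obtain ⟨ub, hub⟩ := hzb
  refine ⟨fun e => ub (qm (σ*ι) e), ?_, ?_⟩
  · intro e
    show ub (qm (σ*ι) (σ (ι e))) = ub (qm (σ*ι) e)
    rw [fq_phi σ ι e]
  · intro e
    show ub (qm (σ*ι) (ι e)) = ub (qm (σ*ι) e) + z e
    have h0 := congrFun hub (qm ι e)
    rw [hAeval] at h0
    have hzbe : zb (qm ι e) = z e := rfl
    rw [hzbe] at h0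
    have h2 : ∀ a b c : ZMod 2, a + b = c → b = a + c := by decide
    exact h2 _ _ _ h0

end potential

theorem even_card_invol (S : Finset D) (f : D → D)
    (hm : ∀ x ∈ S, f x ∈ S) (hi : ∀ x ∈ S, f (f x) = x) (hn : ∀ x ∈ S, f x ≠ x) :
    Even S.card := by
  induction S using Finset.strongInduction with
  | _ S ih =>
    rcases S.eq_empty_or_nonempty with rfl | ⟨a, ha⟩
    · simp
    · have hfa : f a ∈ S := hm a ha
      have hane : f a ≠ a := hn a ha
      set S' := (S.erase a).erase (f a) with hS'
      have hfae : f a ∈ S.erase a := Finset.mem_erase.mpr ⟨hane, hfa⟩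
      have hsub : S' ⊆ S := fun x hx =>
        Finset.mem_of_mem_erase (Finset.mem_of_mem_erase hx)
      have hssub : S' ⊂ S := by
        refine Finset.ssubset_iff_of_subset hsub |>.mpr ⟨a, ha, ?_⟩
        intro hmem
        exact (Finset.mem_erase.mp (Finset.mem_of_mem_erase hmem)).1 rfl
      have hmem' : ∀ x ∈ S', x ∈ S ∧ x ≠ a ∧ x ≠ f a := by
        intro x hx
        have h1 := Finset.mem_erase.mp hx
        have h2 := Finset.mem_erase.mp h1.2
        exact ⟨h2.2, h2.1, h1.1⟩
      have hm' : ∀ x ∈ S', f x ∈ S' := by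
        intro x hx
        obtain ⟨hxS, hxa, hxfa⟩ := hmem' x hx
        refine Finset.mem_erase.mpr ⟨?_, Finset.mem_erase.mpr ⟨?_, hm x hxS⟩⟩
        · intro h; exact hxa (by rw [← hi x hxS, h, hi a ha])
        · intro h; exact hxfa (by rw [← hi x hxS, h])
      have hcard : S.card = S'.card + 2 := by
        rw [hS', Finset.card_erase_of_mem hfae, Finset.card_erase_of_mem ha]
        have h2 : 2 ≤ S.card := Finset.one_lt_card.mpr ⟨a, ha, f a, hfa, fun h => hane h.symm⟩
        omega
      obtain ⟨k, hk⟩ := ih S' hssub (fun x hx => hm' x hx)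
        (fun x hx => hi x (hmem' x hx).1) (fun x hx => hn x (hmem' x hx).1)
      exact ⟨k + 1, by omega⟩

section star
variable {σ ι : Equiv.Perm D}

/-- The key planarity consequence: at the cut vertex, opposite darts have different colors. -/
theorem star_lemma
    (hσ4 : ∀ d, σ (σ (σ (σ d))) = d) (hσ1 : ∀ d, σ d ≠ d) (hσ2 : ∀ d, σ (σ d) ≠ d)
    (hι : ∀ d, ι (ι d) = d) (hιne : ∀ d, ι d ≠ d)
    (hconn : ∀ a b : D, Relation.ReflTransGen (fun x y => y = σ x ∨ y = ι x) a b)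
    (heuler : (Fintype.card (Qt σ) : ℤ) - Fintype.card (Qt ι) + Fintype.card (Qt (σ * ι)) = 2)
    (P : D → Bool) (v₀ : D)
    (hedge : ∀ d, P (ι d) = P d)
    (hvert : ∀ d e, σ.SameCycle d e → ¬ σ.SameCycle v₀ d → P d = P e)
    (h1 : ∃ d, σ.SameCycle v₀ d ∧ P d = true)
    (h2 : ∃ d, σ.SameCycle v₀ d ∧ P d = false) :
    ∀ y, σ.SameCycle v₀ y → P (σ (σ y)) ≠ P y := by
  classical
  intro y hy hcontra
  have hσ3 : ∀ e, σ (σ (σ e)) ≠ e := by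
    intro e he
    have := congrArg σ he
    rw [hσ4 e] at this
    exact hσ1 e this.symm
  have hpow : σ ^ 4 = 1 := pow4_eq_one σ hσ4
  have sc1 : ∀ e : D, σ.SameCycle e (σ e) := fun e => ⟨1, by simp⟩
  have sc2 : ∀ e : D, σ.SameCycle e (σ (σ e)) := fun e => (sc1 e).trans (sc1 (σ e))
  have sc3 : ∀ e : D, σ.SameCycle e (σ (σ (σ e))) := fun e => (sc2 e).trans (sc1 (σ (σ e)))
  -- the four darts at the cut vertex
  have hC : ∀ x, σ.SameCycle v₀ x →
      (x = y ∨ x = σ y ∨ x = σ (σ y) ∨ x = σ (σ (σ y))) := by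
    intro x hx
    exact cyc4 σ hpow ((Equiv.Perm.SameCycle.symm hy).trans hx)
  have hCy : ∀ x, σ.SameCycle v₀ x ↔ σ.SameCycle y x :=
    fun x => ⟨fun h => (Equiv.Perm.SameCycle.symm hy).trans h, fun h => hy.trans h⟩
  -- there is a dart at the cut vertex with the other color
  obtain ⟨w, hwc, hwP⟩ : ∃ w, σ.SameCycle v₀ w ∧ ¬ (P w = P y) := by
    cases hPy : P y
    · obtain ⟨d, hd1, hd2⟩ := h1
      exact ⟨d, hd1, by simp [hd2]⟩
    · obtain ⟨d, hd1, hd2⟩ := h2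
      exact ⟨d, hd1, by simp [hd2]⟩
  -- handshake: evenness of the number of darts at the cut vertex with color P y
  have heven : Even ((Finset.univ.filter
      (fun x => σ.SameCycle v₀ x ∧ P x = P y)).card) := by
    have hAll : Even ((Finset.univ.filter (fun x => P x = P y)).card) := by
      apply even_card_invol _ (fun x => ι x)
      · intro x hx
        simp only [Finset.mem_filter, Finset.mem_univ, true_and] at hx ⊢
        rw [hedge]; exact hx
      · intro x _; exact hι x
      · intro x _; exact hιne x
    have hOut : Even ((Finset.univ.filter
        (fun x => P x = P y ∧ ¬ σ.SameCycle v₀ x)).card) := by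
      apply even_card_invol _ (fun x => σ (σ x))
      · intro x hx
        simp only [Finset.mem_filter, Finset.mem_univ, true_and] at hx ⊢
        obtain ⟨hxP, hxc⟩ := hx
        constructor
        · rw [← (hvert x (σ (σ x)) (sc2 x) hxc)]; exact hxP
        · intro hcc
          exact hxc (hcc.trans (Equiv.Perm.SameCycle.symm (sc2 x)))
      · intro x _; exact hσ4 x
      · intro x _; exact hσ2 x
    have hsplit : (Finset.univ.filter (fun x => P x = P y ∧ σ.SameCycle v₀ x)).card
        + (Finset.univ.filter (fun x => P x = P y ∧ ¬ σ.SameCycle v₀ x)).card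
        = (Finset.univ.filter (fun x => P x = P y)).card := by
      rw [← Finset.filter_filter, ← Finset.filter_filter]
      exact Finset.card_filter_add_card_filter_not _
    have hco : (Finset.univ.filter (fun x => σ.SameCycle v₀ x ∧ P x = P y))
        = (Finset.univ.filter (fun x => P x = P y ∧ σ.SameCycle v₀ x)) := by
      apply Finset.filter_congr
      intro x _
      exact and_comm
    rw [hco]
    obtain ⟨k1, hk1⟩ := hAll
    obtain ⟨k2, hk2⟩ := hOut
    exact ⟨k1 - k2, by omega⟩
  -- distinctness of the four darts
  have d01 : y ≠ σ y := fun h => hσ1 y h.symm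
  have d02 : y ≠ σ (σ y) := fun h => hσ2 y h.symm
  have d03 : y ≠ σ (σ (σ y)) := fun h => hσ3 y h.symm
  have d12 : σ y ≠ σ (σ y) := fun h => hσ1 (σ y) h.symm
  have d13 : σ y ≠ σ (σ (σ y)) := fun h => hσ2 (σ y) h.symm
  have d23 : σ (σ y) ≠ σ (σ (σ y)) := fun h => hσ1 (σ (σ y)) h.symm
  -- case analysis on the colors of σ y and σ³ y
  by_cases hA : P (σ y) = P y <;> by_cases hB : P (σ (σ (σ y))) = P y
  · -- all four darts have color P y: contradicts existence of w
    rcases hC w hwc with rfl | rfl | rfl | rfl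
    · exact hwP rfl
    · exact hwP hA
    · exact hwP hcontra
    · exact hwP hB
  · -- three darts: odd count, contradicts handshake
    have hset : (Finset.univ.filter (fun x => σ.SameCycle v₀ x ∧ P x = P y))
        = {y, σ y, σ (σ y)} := by
      ext x
      simp only [Finset.mem_filter, Finset.mem_univ, true_and, Finset.mem_insert,
        Finset.mem_singleton]
      constructor
      · rintro ⟨hxc, hxP⟩
        rcases hC x hxc with rfl | rfl | rfl | rfl
        · exact Or.inl rfl
        · exact Or.inr (Or.inl rfl)
        · exact Or.inr (Or.inr rfl)
        · exact absurd hxP hB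
      · rintro (rfl | rfl | rfl)
        · exact ⟨hy, rfl⟩
        · exact ⟨hy.trans (sc1 y), hA⟩
        · exact ⟨hy.trans (sc2 y), hcontra⟩
    rw [hset] at heven
    rw [Finset.card_insert_of_notMem (by simp [d01, d02]),
      Finset.card_insert_of_notMem (by simp [d12]), Finset.card_singleton] at heven
    exact (by decide : ¬ Even 3) heven
  · -- symmetric three-dart case
    have hset : (Finset.univ.filter (fun x => σ.SameCycle v₀ x ∧ P x = P y))
        = {y, σ (σ y), σ (σ (σ y))} := by
      ext x
      simp only [Finset.mem_filter, Finset.mem_univ, true_and, Finset.mem_insert,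
        Finset.mem_singleton]
      constructor
      · rintro ⟨hxc, hxP⟩
        rcases hC x hxc with rfl | rfl | rfl | rfl
        · exact Or.inl rfl
        · exact absurd hxP hA
        · exact Or.inr (Or.inl rfl)
        · exact Or.inr (Or.inr rfl)
      · rintro (rfl | rfl | rfl)
        · exact ⟨hy, rfl⟩
        · exact ⟨hy.trans (sc2 y), hcontra⟩
        · exact ⟨hy.trans (sc3 y), hB⟩
    rw [hset] at heven
    rw [Finset.card_insert_of_notMem (by simp [d02, d03]),
      Finset.card_insert_of_notMem (by simp [d23]), Finset.card_singleton] at heven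
    exact (by decide : ¬ Even 3) heven
  · -- alternating case: use the potential from Euler's formula
    set z : D → ZMod 2 := fun x => if P x = P y then 0 else 1 with hz
    have hzι : ∀ d, z (ι d) = z d := by
      intro d; simp only [hz, hedge d]
    have hzy : z y = 0 := by simp [hz]
    have hzσy : z (σ y) = 1 := by simp [hz, hA]
    have hzσ2y : z (σ (σ y)) = 0 := by simp [hz, hcontra]
    have hzσ3y : z (σ (σ (σ y))) = 1 := by simp [hz, hB]
    have hzv : ∀ d, z d + z (σ d) + z (σ (σ d)) + z (σ (σ (σ d))) = 0 := by
      intro d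
      by_cases hd : σ.SameCycle v₀ d
      · rcases hC d hd with rfl | rfl | rfl | rfl
        · rw [hzy, hzσy, hzσ2y, hzσ3y]; decide
        · simp only [hσ4 y]
          rw [hzσy, hzσ2y, hzσ3y, hzy]; decide
        · simp only [hσ4 y]
          rw [hzσ2y, hzσ3y, hzy, hzσy]; decide
        · simp only [hσ4 y]
          rw [hzσ3y, hzy, hzσy, hzσ2y]; decide
      · have e1 : z (σ d) = z d := by simp only [hz, ← hvert d (σ d) (sc1 d) hd]
        have e2 : z (σ (σ d)) = z d := by simp only [hz, ← hvert d (σ (σ d)) (sc2 d) hd]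
        have e3 : z (σ (σ (σ d))) = z d := by simp only [hz, ← hvert d (σ (σ (σ d))) (sc3 d) hd]
        rw [e1, e2, e3]
        generalize z d = a; revert a; decide
    obtain ⟨u, hu1, hu2⟩ := exists_potential hσ4 hσ1 hσ2 hι hιne hconn heuler z hzι hzv y
    have huσ : ∀ x, u (σ x) = u x + z x := by
      intro x
      have h0 := hu1 (ι x)
      rw [hι x] at h0
      rw [h0, hu2 x]
    -- reachability within the P y colored part avoiding the cut vertex
    set Krel : D → D → Prop :=
      fun x x' => x' = ι x ∨ (x' = σ x ∧ ¬ σ.SameCycle v₀ x) with hKrel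
    set K : D → Prop := fun x => Relation.ReflTransGen Krel y x with hKdef
    have hK1 : ∀ x, K x → P x = P y ∧ u x = u y := by
      intro x hx
      rw [hKdef] at hx
      induction hx with
      | refl => exact ⟨rfl, rfl⟩
      | tail hp hs ih =>
        rcases hs with rfl | ⟨rfl, hnc⟩
        · refine ⟨by rw [hedge]; exact ih.1, ?_⟩
          rw [hu2 _, show z _ = 0 from by simp [hz, ih.1], add_zero]
          exact ih.2
        · refine ⟨by rw [← hvert _ _ (sc1 _) hnc]; exact ih.1, ?_⟩
          rw [huσ _, show z _ = 0 from by simp [hz, ih.1], add_zero]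
          exact ih.2
    have hKι : ∀ x, K x → K (ι x) := by
      intro x hx
      exact Relation.ReflTransGen.tail hx (Or.inl rfl)
    have hKσ : ∀ x, K x → ¬ σ.SameCycle v₀ x → K (σ x) := by
      intro x hx hnc
      exact Relation.ReflTransGen.tail hx (Or.inr ⟨rfl, hnc⟩)
    set Kf : Finset D := Finset.univ.filter K with hKf
    have hKeven : Even Kf.card := by
      apply even_card_invol _ (fun x => ι x)
      · intro x hx
        simp only [hKf, Finset.mem_filter, Finset.mem_univ, true_and] at hx ⊢
        exact hKι x hx
      · intro x _; exact hι x
      · intro x _; exact hιne x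
    have hKout : Even ((Kf.filter (fun x => ¬ σ.SameCycle v₀ x)).card) := by
      apply even_card_invol _ (fun x => σ (σ x))
      · intro x hx
        simp only [hKf, Finset.mem_filter, Finset.mem_univ, true_and] at hx ⊢
        obtain ⟨hxK, hxc⟩ := hx
        have h1 : K (σ x) := hKσ x hxK hxc
        have hσxc : ¬ σ.SameCycle v₀ (σ x) :=
          fun hcc => hxc (hcc.trans (Equiv.Perm.SameCycle.symm (sc1 x)))
        exact ⟨hKσ (σ x) h1 hσxc, fun hcc => hxc (hcc.trans (Equiv.Perm.SameCycle.symm (sc2 x)))⟩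
      · intro x _; exact hσ4 x
      · intro x _; exact hσ2 x
    have hKin : Even ((Kf.filter (fun x => σ.SameCycle v₀ x)).card) := by
      have hsplit := Finset.card_filter_add_card_filter_not
        (s := Kf) (p := fun x => σ.SameCycle v₀ x)
      obtain ⟨k1, hk1⟩ := hKeven
      obtain ⟨k2, hk2⟩ := hKout
      exact ⟨k1 - k2, by omega⟩
    have hsub : (Kf.filter (fun x => σ.SameCycle v₀ x)) ⊆ {y, σ (σ y)} := by
      intro x hx
      simp only [hKf, Finset.mem_filter, Finset.mem_univ, true_and] at hx
      obtain ⟨hxK, hxc⟩ := hx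
      have hxP := (hK1 x hxK).1
      simp only [Finset.mem_insert, Finset.mem_singleton]
      rcases hC x hxc with rfl | rfl | rfl | rfl
      · exact Or.inl rfl
      · exact absurd hxP hA
      · exact Or.inr rfl
      · exact absurd hxP hB
    have hymem : y ∈ Kf.filter (fun x => σ.SameCycle v₀ x) := by
      simp only [hKf, Finset.mem_filter, Finset.mem_univ, true_and]
      exact ⟨Relation.ReflTransGen.refl, hy⟩
    have hσ2mem : σ (σ y) ∈ Kf.filter (fun x => σ.SameCycle v₀ x) := by
      by_contra hno
      have : Kf.filter (fun x => σ.SameCycle v₀ x) ⊆ {y} := by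
        intro x hx
        have := hsub hx
        simp only [Finset.mem_insert, Finset.mem_singleton] at this ⊢
        rcases this with rfl | rfl
        · rfl
        · exact absurd hx hno
      have hcard : (Kf.filter (fun x => σ.SameCycle v₀ x)).card = 1 := by
        have hle := Finset.card_le_card this
        rw [Finset.card_singleton] at hle
        have hge : 1 ≤ (Kf.filter (fun x => σ.SameCycle v₀ x)).card :=
          Finset.card_pos.mpr ⟨y, hymem⟩
        omega
      rw [hcard] at hKin
      exact (by decide : ¬ Even 1) hKin
    -- derive the contradiction
    have hKσ2y : K (σ (σ y)) := by
      have := Finset.mem_filter.mp hσ2mem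
      have := Finset.mem_filter.mp (Finset.mem_filter.mp hσ2mem).1
      exact this.2
    have hu_eq : u (σ (σ y)) = u y := (hK1 _ hKσ2y).2
    have hu_ne : u (σ (σ y)) = u y + 1 := by
      rw [huσ (σ y), huσ y, hzy, hzσy, add_zero]
    rw [hu_eq] at hu_ne
    have : (0 : ZMod 2) = 1 := by
      have := add_left_cancel (a := u y) (b := (0:ZMod 2)) (c := 1) (by rw [add_zero]; exact hu_ne)
      exact this
    exact absurd this (by decide)
end star

/-- Let `G` be a connected 4-regular plane graph with a
cutpoint `c` (the vertex of dart `v₀`), the separation into `G₁`/`G₂` being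
given by `P` as a marking of darts constant on edges and on vertices other
than `c`, with `c` incident to both parts. Then all four edges incident with
`c` belong to the same circuit of the threaded circuit partition of `G`: any
two darts at `c` lie in a common set of darts closed under thread-continuation
and reversal (hence in the same undirected threaded circuit). -/
theorem cutpoint_edges_in_same_threaded_circuit
    {D : Type} [Fintype D] [DecidableEq D] (M : CombMap D)
    (h4 : M.FourRegular) (hconn : M.Connected) (hpl : M.EulerPlanar)
    (P : D → Bool) (v₀ : D)
    (hedge : ∀ d, P (M.inv d) = P d)
    (hvert : ∀ d e, M.rot.SameCycle d e → ¬ M.rot.SameCycle v₀ d → P d = P e)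
    (h1 : ∃ d, M.rot.SameCycle v₀ d ∧ P d = true)
    (h2 : ∃ d, M.rot.SameCycle v₀ d ∧ P d = false) :
    ∀ d e : D, M.rot.SameCycle v₀ d → M.rot.SameCycle v₀ e →
      ∀ s : Set D, d ∈ s → M.ClosedTC s → e ∈ s := by
  classical
  obtain ⟨hσ4, hσ1, hσ2⟩ := h4
  set σ := M.rot with hσdef
  set ι := M.inv with hιdef
  have hι : ∀ d, ι (ι d) = d := M.inv_invol
  have hιne : ∀ d, ι d ≠ d := M.inv_ne
  have hσ3 : ∀ e, σ (σ (σ e)) ≠ e := by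
    intro e he
    have := congrArg σ he
    rw [hσ4 e] at this
    exact hσ1 e this.symm
  have hpow : σ ^ 4 = 1 := pow4_eq_one σ hσ4
  have hι2 : ι * ι = 1 := by ext e; simp [Equiv.Perm.mul_apply, hι e]
  have sc1 : ∀ e : D, σ.SameCycle e (σ e) := fun e => ⟨1, by simp⟩
  have sc2 : ∀ e : D, σ.SameCycle e (σ (σ e)) := fun e => (sc1 e).trans (sc1 (σ e))
  have hconn' : ∀ a b : D, Relation.ReflTransGen (fun x y => y = σ x ∨ y = ι x) a b := by
    intro a b
    exact Relation.ReflTransGen.mono (fun x y h => h.1) _ _ (hconn a b)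
  have heuler' : (Fintype.card (Qt σ) : ℤ) - Fintype.card (Qt ι)
      + Fintype.card (Qt (σ * ι)) = 2 := by
    have h0 := hpl
    unfold CombMap.EulerPlanar CombMap.vertexCount CombMap.edgeCount CombMap.faceCount at h0
    rw [orbcount M.rot, orbcount M.inv, orbcount (M.rot * M.inv)] at h0
    exact h0
  have hstar : ∀ y, σ.SameCycle v₀ y → P (σ (σ y)) ≠ P y :=
    star_lemma hσ4 hσ1 hσ2 hι hιne hconn' heuler' P v₀ hedge hvert h1 h2
  intro d e hd he s hds hs
  -- closure properties of s
  have sInv : ∀ x, x ∈ s → ι x ∈ s := fun x hx => (hs x hx).2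
  have sT : ∀ x, x ∈ s → σ (σ (ι x)) ∈ s := fun x hx => (hs x hx).1
  have sσ2 : ∀ x, x ∈ s → σ (σ x) ∈ s := by
    intro x hx
    have h0 := sT (ι x) (sInv x hx)
    rw [hι x] at h0
    exact h0
  set tp : Equiv.Perm D := σ * σ * ι with htp
  have htpapp : ∀ x, tp x = σ (σ (ι x)) := by
    intro x; simp [htp, Equiv.Perm.mul_apply]
  have sTp : ∀ x, x ∈ s → tp x ∈ s := by
    intro x hx; rw [htpapp]; exact sT x hx
  have sTpPow : ∀ (i : ℕ) (x : D), x ∈ s → (tp ^ i) x ∈ s := by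
    intro i
    induction i with
    | zero => intro x hx; simpa using hx
    | succ i ih =>
      intro x hx
      rw [pow_succ', Equiv.Perm.mul_apply]
      exact sTp _ (ih x hx)
  -- the four darts at the cut vertex
  have hC : ∀ x, σ.SameCycle v₀ x →
      (x = d ∨ x = σ d ∨ x = σ (σ d) ∨ x = σ (σ (σ d))) := by
    intro x hx
    exact cyc4 σ hpow ((Equiv.Perm.SameCycle.symm hd).trans hx)
  -- find a color-changing step along the thread walk from d
  have hstep : ∃ i : ℕ, P ((tp ^ i) d) = P d ∧ ¬ (P ((tp ^ (i+1)) d) = P d) := by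
    by_contra hno
    push_neg at hno
    have hchain : ∀ i : ℕ, P ((tp ^ i) d) = P d := by
      intro i
      induction i with
      | zero => simp
      | succ i ih => exact hno i ih
    set N := orderOf tp with hN
    have hNpos : 0 < N := orderOf_pos tp
    have htpN : tp ^ N = 1 := pow_orderOf_eq_one tp
    have hkey : (tp ^ (N - 1)) d = ι (σ (σ d)) := by
      apply tp.injective
      have e1 : tp ((tp ^ (N - 1)) d) = d := by
        rw [← Equiv.Perm.mul_apply, ← pow_succ']
        rw [show N - 1 + 1 = N from by omega, htpN]
        simp
      have e2 : tp (ι (σ (σ d))) = d := by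
        rw [htpapp, hι, hσ4]
      rw [e1, e2]
    have hc := hchain (N - 1)
    rw [hkey] at hc
    rw [hedge] at hc
    exact hstar d hd hc
  obtain ⟨i, hPi, hPi1⟩ := hstep
  set x := (tp ^ i) d with hx
  have hxs : x ∈ s := sTpPow i d hds
  have hPtx : ¬ (P (tp x) = P d) := by
    rw [hx, ← Equiv.Perm.mul_apply, ← pow_succ']
    exact hPi1
  have hιxc : σ.SameCycle v₀ (ι x) := by
    by_contra hnc
    apply hPtx
    have h0 := hvert (ι x) (σ (σ (ι x))) (sc2 (ι x)) hnc
    rw [htpapp, ← h0, hedge, hPi]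
  -- identify ι x among the four darts at the cut vertex
  have hσd_or : σ d ∈ s ∨ σ (σ (σ d)) ∈ s := by
    rcases hC (ι x) hιxc with hcase | hcase | hcase | hcase
    · -- ι x = d : the thread walk would traverse the edge of d in both directions
      exfalso
      have : x = ι d := by rw [← hι x, hcase]
      exact claimstar σ ι hpow hσ2 hι2 hιne d i (hx ▸ this)
    · left
      rw [← hcase]
      exact sInv x hxs
    · -- ι x = σ² d : contradicts the color of x
      exfalso
      have h0 : P (ι x) = P d := by rw [hedge, hPi]
      rw [hcase] at h0
      exact hstar d hd h0
    · right
      rw [← hcase]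
      exact sInv x hxs
  -- all four darts at the cut vertex lie in s
  have hall : d ∈ s ∧ σ d ∈ s ∧ σ (σ d) ∈ s ∧ σ (σ (σ d)) ∈ s := by
    refine ⟨hds, ?_, sσ2 d hds, ?_⟩
    · rcases hσd_or with h0 | h0
      · exact h0
      · have h5 := sσ2 _ h0
        simp only [hσ4 d] at h5
        exact h5
    · rcases hσd_or with h0 | h0
      · exact sσ2 _ h0
      · exact h0
  rcases hC e he with rfl | rfl | rfl | rfl
  · exact hall.1
  · exact hall.2.1
  · exact hall.2.2.1
  · exact hall.2.2.2
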